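/- arXiv:1410.7081 — 3 statements merged into one kernel-verified Lean document; each statement's English description precedes it below -/
import Mathlib

section
/- For 0 < q < 1, the Jacobi theta functions satisfy θ₃(q)⁴ = θ₂(q)⁴ + θ₄(q)⁴. -/
open Real

noncomputable def theta2 (q : ℝ) : ℝ := ∑' n : ℤ, q ^ (((n : ℝ) - 1/2)^2)

noncomputable def theta3 (q : ℝ) : ℝ := ∑' n : ℤ, q ^ ((n : ℝ)^2)

noncomputable def theta4 (q : ℝ) : ℝ := ∑' n : ℤ, (-1 : ℝ)^n * q ^ ((n : ℝ)^2)

namespace Jacobi4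

lemma summable_rpow_exp {q : ℝ} (hq : 0 < q) (hq1 : q < 1) (E : ℤ → ℝ)
    (hE : ∀ n : ℤ, |(n : ℝ)| - 1 ≤ E n) : Summable (fun n : ℤ => q ^ E n) := by
  have key : ∀ F : ℕ → ℝ, (∀ n : ℕ, (n : ℝ) - 1 ≤ F n) → Summable (fun n : ℕ => q ^ F n) := by
    intro F hF
    apply Summable.of_nonneg_of_le (fun n => (rpow_pos_of_pos hq _).le)
      (f := fun n : ℕ => q ^ (n : ℕ) * q⁻¹)
    · intro n
      have h1 : q ^ F n ≤ q ^ ((n : ℝ) - 1) :=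
        rpow_le_rpow_of_exponent_ge hq hq1.le (hF n)
      have h2 : q ^ ((n : ℝ) - 1) = q ^ (n : ℕ) * q⁻¹ := by
        rw [Real.rpow_sub hq, Real.rpow_natCast, Real.rpow_one, div_eq_mul_inv]
      linarith [h1, h2.le]
    · exact (summable_geometric_of_lt_one hq.le hq1).mul_right _
  apply Summable.of_nat_of_neg
  · apply key
    intro n
    have := hE (n : ℤ)
    simpa using this
  · apply key
    intro n
    have := hE (-(n : ℤ))
    simpa using this

abbrev V4 := (ℤ × ℤ) × (ℤ × ℤ)

def sum4 (v : V4) : ℤ := v.1.1 + v.1.2 + v.2.1 + v.2.2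

noncomputable def Gf (q : ℝ) (v : V4) : ℝ :=
  q ^ ((v.1.1 : ℝ) ^ 2 + (v.1.2 : ℝ) ^ 2 + (v.2.1 : ℝ) ^ 2 + (v.2.2 : ℝ) ^ 2)

noncomputable def Af (q : ℝ) (v : V4) : ℝ :=
  q ^ (((v.1.1 : ℝ) - 1/2) ^ 2 + ((v.1.2 : ℝ) - 1/2) ^ 2 + ((v.2.1 : ℝ) - 1/2) ^ 2
    + ((v.2.2 : ℝ) - 1/2) ^ 2)

noncomputable def Ef (q : ℝ) (v : V4) : ℝ := (-1 : ℝ) ^ sum4 v * Gf q v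

def S4 : Set V4 := {v | Odd (sum4 v)}

lemma mem_S4 {v : V4} : v ∈ S4 ↔ Odd (sum4 v) := Iff.rfl

lemma mem_S4c {v : V4} : v ∈ S4ᶜ ↔ Even (sum4 v) := by
  rw [Set.mem_compl_iff, mem_S4, Int.not_odd_iff_even]

def flipE : ↥S4 ≃ ↥(S4ᶜ) where
  toFun v := ⟨((1 - v.1.1.1, v.1.1.2), v.1.2), by
    have hv := mem_S4.mp v.2
    rw [Int.odd_iff] at hv
    rw [mem_S4c, Int.even_iff]
    simp only [sum4] at hv ⊢
    omega⟩
  invFun v := ⟨((1 - v.1.1.1, v.1.1.2), v.1.2), by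
    have hv := mem_S4c.mp v.2
    rw [Int.even_iff] at hv
    rw [mem_S4, Int.odd_iff]
    simp only [sum4] at hv ⊢
    omega⟩
  left_inv v := by
    obtain ⟨⟨⟨a, b⟩, c, d⟩, hv⟩ := v
    apply Subtype.ext
    simp only [Prod.mk.injEq, and_true]
    omega
  right_inv v := by
    obtain ⟨⟨⟨a, b⟩, c, d⟩, hv⟩ := v
    apply Subtype.ext
    simp only [Prod.mk.injEq, and_true]
    omega

def psiE : ↥(S4ᶜ) ≃ ↥S4 where
  toFun v := ⟨(((v.1.1.1 + v.1.1.2 + v.1.2.1 + v.1.2.2 - 2)/2,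
      (v.1.1.1 + v.1.1.2 - v.1.2.1 - v.1.2.2)/2),
      ((v.1.1.1 - v.1.1.2 + v.1.2.1 - v.1.2.2)/2,
      (v.1.1.1 - v.1.1.2 - v.1.2.1 + v.1.2.2)/2)), by
    have hv := mem_S4c.mp v.2
    rw [Int.even_iff] at hv
    rw [mem_S4, Int.odd_iff]
    simp only [sum4] at hv ⊢
    omega⟩
  invFun w := ⟨(((w.1.1.1 + w.1.1.2 + w.1.2.1 + w.1.2.2 + 1)/2,
      (w.1.1.1 + w.1.1.2 - w.1.2.1 - w.1.2.2 + 1)/2),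
      ((w.1.1.1 - w.1.1.2 + w.1.2.1 - w.1.2.2 + 1)/2,
      (w.1.1.1 - w.1.1.2 - w.1.2.1 + w.1.2.2 + 1)/2)), by
    have hw := mem_S4.mp w.2
    rw [Int.odd_iff] at hw
    rw [mem_S4c, Int.even_iff]
    simp only [sum4] at hw ⊢
    omega⟩
  left_inv v := by
    obtain ⟨⟨⟨a, b⟩, c, d⟩, hv⟩ := v
    have hv' := mem_S4c.mp hv
    rw [Int.even_iff] at hv'
    simp only [sum4] at hv'
    apply Subtype.ext
    simp only [Prod.mk.injEq, and_true]
    omega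
  right_inv w := by
    obtain ⟨⟨⟨a, b⟩, c, d⟩, hw⟩ := w
    have hw' := mem_S4.mp hw
    rw [Int.odd_iff] at hw'
    simp only [sum4] at hw'
    apply Subtype.ext
    simp only [Prod.mk.injEq, and_true]
    omega

lemma flip_val (q : ℝ) (v : ↥S4) : Af q ↑(flipE v) = Af q ↑v := by
  obtain ⟨⟨⟨a, b⟩, c, d⟩, hv⟩ := v
  simp only [flipE, Equiv.coe_fn_mk, Af]
  congr 1
  push_cast
  ring

lemma psi_val (q : ℝ) (v : ↥(S4ᶜ)) : Gf q ↑(psiE v) = Af q ↑v := by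
  obtain ⟨⟨⟨a, b⟩, c, d⟩, hv⟩ := v
  have hv' := mem_S4c.mp hv
  rw [Int.even_iff] at hv'
  simp only [sum4] at hv'
  have h1 : (2 : ℤ) * ((a + b + c + d - 2)/2) = a + b + c + d - 2 := by omega
  have h2 : (2 : ℤ) * ((a + b - c - d)/2) = a + b - c - d := by omega
  have h3 : (2 : ℤ) * ((a - b + c - d)/2) = a - b + c - d := by omega
  have h4 : (2 : ℤ) * ((a - b - c + d)/2) = a - b - c + d := by omega
  have h1' : (((a + b + c + d - 2)/2 : ℤ) : ℝ) = ((a:ℝ) + b + c + d - 2)/2 := by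
    have := congrArg (fun x : ℤ => (x : ℝ)) h1; push_cast at this; linarith
  have h2' : (((a + b - c - d)/2 : ℤ) : ℝ) = ((a:ℝ) + b - c - d)/2 := by
    have := congrArg (fun x : ℤ => (x : ℝ)) h2; push_cast at this; linarith
  have h3' : (((a - b + c - d)/2 : ℤ) : ℝ) = ((a:ℝ) - b + c - d)/2 := by
    have := congrArg (fun x : ℤ => (x : ℝ)) h3; push_cast at this; linarith
  have h4' : (((a - b - c + d)/2 : ℤ) : ℝ) = ((a:ℝ) - b - c + d)/2 := by
    have := congrArg (fun x : ℤ => (x : ℝ)) h4; push_cast at this; linarith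
  simp only [psiE, Equiv.coe_fn_mk, Gf, Af]
  congr 1
  rw [h1', h2', h3', h4']
  ring

lemma pow_four_eq {f : ℤ → ℝ} (hf : Summable fun n => ‖f n‖) :
    (∑' n, f n) ^ 4 = ∑' v : V4, f v.1.1 * f v.1.2 * (f v.2.1 * f v.2.2) := by
  have h2 : (∑' n, f n) ^ 2 = ∑' p : ℤ × ℤ, f p.1 * f p.2 := by
    rw [sq]; exact tsum_mul_tsum_of_summable_norm hf hf
  have hF2 : Summable fun p : ℤ × ℤ => ‖f p.1 * f p.2‖ := hf.mul_norm hf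
  have h4 : (∑' p : ℤ × ℤ, f p.1 * f p.2) ^ 2
      = ∑' v : V4, (f v.1.1 * f v.1.2) * (f v.2.1 * f v.2.2) := by
    rw [sq]; exact tsum_mul_tsum_of_summable_norm hF2 hF2
  calc (∑' n, f n) ^ 4 = ((∑' n, f n) ^ 2) ^ 2 := by ring
    _ = _ := by rw [h2, h4]

lemma summable_four {f : ℤ → ℝ} (hf : Summable fun n => ‖f n‖) :
    Summable fun v : V4 => f v.1.1 * f v.1.2 * (f v.2.1 * f v.2.2) :=
  ((hf.mul_norm hf).mul_norm (hf.mul_norm hf)).of_norm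

end Jacobi4

open Jacobi4

theorem stmt_2 (q : ℝ) (hq : 0 < q) (hq1 : q < 1) :
    (theta3 q)^4 = (theta2 q)^4 + (theta4 q)^4 := by
  have hqpos : ∀ e : ℝ, 0 < q ^ e := fun e => rpow_pos_of_pos hq e
  have sg : Summable (fun n : ℤ => q ^ ((n : ℝ) ^ 2)) := by
    apply summable_rpow_exp hq hq1
    intro n
    rcases abs_cases (n : ℝ) with ⟨h, _⟩ | ⟨h, _⟩ <;>
      nlinarith [sq_nonneg ((n:ℝ) - 1), sq_nonneg ((n:ℝ) + 1)]
  have sh : Summable (fun n : ℤ => q ^ (((n : ℝ) - 1/2) ^ 2)) := by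
    apply summable_rpow_exp hq hq1
    intro n
    rcases abs_cases (n : ℝ) with ⟨h, _⟩ | ⟨h, _⟩ <;>
      nlinarith [sq_nonneg ((n:ℝ) - 3/2), sq_nonneg ((n:ℝ) + 1/2)]
  have sgn : Summable (fun n : ℤ => ‖q ^ ((n : ℝ) ^ 2)‖) := by
    simpa only [Real.norm_eq_abs, abs_of_pos (hqpos _)] using sg
  have shn : Summable (fun n : ℤ => ‖q ^ (((n : ℝ) - 1/2) ^ 2)‖) := by
    simpa only [Real.norm_eq_abs, abs_of_pos (hqpos _)] using sh
  have normval : ∀ n : ℤ, ‖(-1 : ℝ) ^ n * q ^ ((n : ℝ) ^ 2)‖ = q ^ ((n : ℝ) ^ 2) := by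
    intro n
    rcases Int.even_or_odd n with h | h
    · rw [h.neg_one_zpow, one_mul, Real.norm_eq_abs, abs_of_pos (hqpos _)]
    · rw [h.neg_one_zpow, Real.norm_eq_abs, abs_mul, abs_neg, abs_one, one_mul,
        abs_of_pos (hqpos _)]
  have sen : Summable (fun n : ℤ => ‖(-1 : ℝ) ^ n * q ^ ((n : ℝ) ^ 2)‖) :=
    sg.congr fun n => (normval n).symm
  have rpow4 : ∀ x y z w : ℝ, q ^ x * q ^ y * (q ^ z * q ^ w) = q ^ (x + y + z + w) := by
    intro x y z w
    rw [show x + y + z + w = x + (y + (z + w)) by ring, Real.rpow_add hq, Real.rpow_add hq,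
      Real.rpow_add hq]
    ring
  have neg1ne : (-1 : ℝ) ≠ 0 := by norm_num
  have eprod : ∀ v : V4,
      (-1 : ℝ) ^ v.1.1 * q ^ ((v.1.1 : ℝ) ^ 2) * ((-1 : ℝ) ^ v.1.2 * q ^ ((v.1.2 : ℝ) ^ 2)) *
        ((-1 : ℝ) ^ v.2.1 * q ^ ((v.2.1 : ℝ) ^ 2) * ((-1 : ℝ) ^ v.2.2 * q ^ ((v.2.2 : ℝ) ^ 2)))
        = Ef q v := by
    intro v
    rw [Ef, Gf, sum4, zpow_add₀ neg1ne, zpow_add₀ neg1ne, zpow_add₀ neg1ne, ← rpow4]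
    ring
  have h3eq : theta3 q ^ 4 = ∑' v : V4, Gf q v := by
    rw [theta3, pow_four_eq sgn]
    exact tsum_congr fun v => rpow4 _ _ _ _
  have h2eq : theta2 q ^ 4 = ∑' v : V4, Af q v := by
    rw [theta2, pow_four_eq shn]
    exact tsum_congr fun v => rpow4 _ _ _ _
  have h4eq : theta4 q ^ 4 = ∑' v : V4, Ef q v := by
    rw [theta4, pow_four_eq sen]
    exact tsum_congr fun v => eprod v
  have SG : Summable (Gf q) := (summable_four sgn).congr fun v => rpow4 _ _ _ _
  have SA : Summable (Af q) := (summable_four shn).congr fun v => rpow4 _ _ _ _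
  have SE : Summable (Ef q) := (summable_four sen).congr fun v => eprod v
  have splitG := Summable.tsum_add_tsum_compl (s := S4) (f := Gf q) (SG.subtype S4) (SG.subtype S4ᶜ)
  have splitA := Summable.tsum_add_tsum_compl (s := S4) (f := Af q) (SA.subtype S4) (SA.subtype S4ᶜ)
  have splitE := Summable.tsum_add_tsum_compl (s := S4) (f := Ef q) (SE.subtype S4) (SE.subtype S4ᶜ)
  have hEs : ∑' v : ↥S4, Ef q ↑v = -∑' v : ↥S4, Gf q ↑v := by
    rw [← tsum_neg]
    refine tsum_congr fun v => ?_
    have hv := mem_S4.mp v.2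
    rw [Ef, hv.neg_one_zpow]
    ring
  have hEsc : ∑' v : ↥(S4ᶜ), Ef q ↑v = ∑' v : ↥(S4ᶜ), Gf q ↑v := by
    refine tsum_congr fun v => ?_
    have hv := mem_S4c.mp v.2
    rw [Ef, hv.neg_one_zpow]
    ring
  have hAflip : ∑' v : ↥S4, Af q ↑v = ∑' v : ↥(S4ᶜ), Af q ↑v := by
    rw [← flipE.tsum_eq (fun v : ↥(S4ᶜ) => Af q ↑v)]
    exact tsum_congr fun v => (flip_val q v).symm
  have hpsi : ∑' v : ↥(S4ᶜ), Af q ↑v = ∑' w : ↥S4, Gf q ↑w := by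
    rw [← psiE.tsum_eq (fun w : ↥S4 => Gf q ↑w)]
    exact tsum_congr fun v => (psi_val q v).symm
  rw [h2eq, h3eq, h4eq, ← splitG, ← splitA, ← splitE, hEs, hEsc, hAflip, hpsi]
  ring
end

section
/- For Re(s) > 1, ∫₀^∞ θ₂(e^{-t})θ₄(e^{-t}) t^{s-1} dt = Γ(s) · Σ_{(m₁,m₂)∈ℤ²} (-1)^{m₂} / ((m₁-1/2)² + m₂²)^s. -/
set_option maxHeartbeats 1000000


open MeasureTheory

open Real Complex Set

lemma aux_summable_gauss (c : ℝ) {t : ℝ} (ht : 0 < t) :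
    Summable fun n : ℤ => rexp (-t * ((n : ℝ) + c) ^ 2) := by
  have h : 0 < t / π := div_pos ht pi_pos
  refine (HurwitzZeta.hasSum_int_evenKernel c h).summable.congr fun n => ?_
  congr 1
  field_simp

lemma aux_hasSum_theta2 {t : ℝ} (ht : 0 < t) :
    HasSum (fun n : ℤ => rexp (-t * ((n : ℝ) - 1/2) ^ 2)) (theta2 (rexp (-t))) := by
  have hsum : Summable fun n : ℤ => rexp (-t * ((n : ℝ) - 1/2) ^ 2) := by
    simpa [sub_eq_add_neg] using aux_summable_gauss (-(1/2)) ht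
  have h : theta2 (rexp (-t)) = ∑' n : ℤ, rexp (-t * ((n : ℝ) - 1/2) ^ 2) := by
    unfold theta2
    congr 1
    funext n
    rw [← Real.exp_mul]
  rw [h]
  exact hsum.hasSum

lemma aux_hasSum_theta4 {t : ℝ} (ht : 0 < t) :
    HasSum (fun n : ℤ => (-1 : ℝ) ^ n * rexp (-t * ((n : ℝ)) ^ 2)) (theta4 (rexp (-t))) := by
  have hbase : Summable fun n : ℤ => rexp (-t * ((n : ℝ)) ^ 2) := by
    simpa using aux_summable_gauss 0 ht
  have hsum : Summable fun n : ℤ => (-1 : ℝ) ^ n * rexp (-t * ((n : ℝ)) ^ 2) := by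
    refine Summable.of_norm_bounded hbase fun n => ?_
    rw [norm_mul, norm_zpow, norm_neg, norm_one, one_zpow, one_mul,
      Real.norm_of_nonneg (Real.exp_pos _).le]
  have h : theta4 (rexp (-t)) = ∑' n : ℤ, (-1 : ℝ) ^ n * rexp (-t * ((n : ℝ)) ^ 2) := by
    unfold theta4
    congr 1
    funext n
    rw [← Real.exp_mul]
  rw [h]
  exact hsum.hasSum

lemma aux_half_le (m : ℤ) : (1/2 : ℝ) ≤ |(m : ℝ) - 1/2| := by
  have h : (1 : ℤ) ≤ |2 * m - 1| := Int.one_le_abs (by omega)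
  have h2 : (1 : ℝ) ≤ |2 * (m : ℝ) - 1| := by exact_mod_cast h

  rw [show ((m : ℝ) - 1/2) = (2 * (m : ℝ) - 1) / 2 by ring, abs_div]
  rw [show |(2 : ℝ)| = 2 by norm_num]
  linarith

theorem stmt_4 (s : ℂ) (hs : 1 < s.re) :
    ∫ t in Set.Ioi (0:ℝ),
        ((theta2 (Real.exp (-t)) * theta4 (Real.exp (-t)) : ℝ) : ℂ) * (t : ℂ) ^ (s - 1)
      = Complex.Gamma s *
          ∑' m : ℤ × ℤ,
            ((-1 : ℂ) ^ m.2) / ((((m.1 : ℝ) - 1/2)^2 + (m.2 : ℝ)^2 : ℝ) : ℂ) ^ s := by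
  have hσ : 1 < s.re := hs
  have hp_lb : ∀ m : ℤ × ℤ, |(m.1 : ℝ) - 1/2| * |(m.2 : ℝ) - 1/2| / 2
      ≤ ((m.1 : ℝ) - 1/2) ^ 2 + (m.2 : ℝ) ^ 2 := by
    intro m
    have hx := aux_half_le m.1
    have hy : |(m.2 : ℝ) - 1/2| ≤ |(m.2 : ℝ)| + 1/2 := by
      calc |(m.2 : ℝ) - 1/2| ≤ |(m.2 : ℝ)| + |(1/2 : ℝ)| := abs_sub _ _
        _ = |(m.2 : ℝ)| + 1/2 := by norm_num
    have hz : (0 : ℝ) ≤ |(m.2 : ℝ)| := abs_nonneg _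
    have hsx : |(m.1 : ℝ) - 1/2| ^ 2 = ((m.1 : ℝ) - 1/2) ^ 2 := sq_abs _
    have hsy : |(m.2 : ℝ)| ^ 2 = ((m.2 : ℝ)) ^ 2 := sq_abs _
    nlinarith [sq_nonneg (|(m.1 : ℝ) - 1/2| - |(m.2 : ℝ)|), abs_nonneg ((m.1 : ℝ) - 1/2)]
  have hp_pos : ∀ m : ℤ × ℤ, 0 < ((m.1 : ℝ) - 1/2) ^ 2 + (m.2 : ℝ) ^ 2 := by
    intro m
    have h1 := hp_lb m
    have h2 := aux_half_le m.1
    have h3 := aux_half_le m.2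
    have h4 : (1/4 : ℝ) ≤ |(m.1 : ℝ) - 1/2| * |(m.2 : ℝ) - 1/2| := by nlinarith
    linarith
  have hp' : ∀ m : ℤ × ℤ, ((-1 : ℂ) ^ m.2 = 0) ∨
      (0 < ((m.1 : ℝ) - 1/2) ^ 2 + (m.2 : ℝ) ^ 2) := fun m => Or.inr (hp_pos m)
  have hs0 : 0 < s.re := by linarith
  have hF : ∀ t ∈ Ioi (0:ℝ), HasSum (fun m : ℤ × ℤ =>
      (-1 : ℂ) ^ m.2 * rexp (-(((m.1 : ℝ) - 1/2) ^ 2 + (m.2 : ℝ) ^ 2) * t))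
      ((theta2 (rexp (-t)) * theta4 (rexp (-t)) : ℝ) : ℂ) := by
    intro t ht
    rw [mem_Ioi] at ht
    have h2 := aux_hasSum_theta2 ht
    have h4 := aux_hasSum_theta4 ht
    have hn2 : Summable fun n : ℤ => ‖rexp (-t * ((n : ℝ) - 1/2) ^ 2)‖ :=
      h2.summable.congr fun n => (Real.norm_of_nonneg (Real.exp_pos _).le).symm
    have hn4 : Summable fun n : ℤ => ‖(-1 : ℝ) ^ n * rexp (-t * ((n : ℝ)) ^ 2)‖ := by
      refine (aux_summable_gauss 0 ht).congr fun n => ?_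
      rw [norm_mul, norm_zpow, norm_neg, norm_one, one_zpow, one_mul,
        Real.norm_of_nonneg (Real.exp_pos _).le]
      simp
    have hprod := summable_mul_of_summable_norm hn2 hn4
    have hmul := h2.mul h4 hprod
    have hC : HasSum (fun m : ℤ × ℤ =>
        ((rexp (-t * ((m.1 : ℝ) - 1/2) ^ 2)
          * ((-1 : ℝ) ^ m.2 * rexp (-t * ((m.2 : ℝ)) ^ 2)) : ℝ) : ℂ))
        ((theta2 (rexp (-t)) * theta4 (rexp (-t)) : ℝ) : ℂ) := hasSum_ofReal.mpr hmul
    refine hC.congr_fun fun m => ?_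
    have hre : rexp (-t * ((m.1 : ℝ) - 1/2) ^ 2) * ((-1 : ℝ) ^ m.2 * rexp (-t * ((m.2 : ℝ)) ^ 2))
        = (-1 : ℝ) ^ m.2 * rexp (-(((m.1 : ℝ) - 1/2) ^ 2 + (m.2 : ℝ) ^ 2) * t) := by
      rw [mul_left_comm, ← Real.exp_add]
      congr 2
      ring
    rw [hre]
    push_cast
    ring
  have h_sum : Summable fun m : ℤ × ℤ =>
      ‖(-1 : ℂ) ^ m.2‖ / (((m.1 : ℝ) - 1/2) ^ 2 + (m.2 : ℝ) ^ 2) ^ s.re := by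
    have g1 : Summable fun n : ℤ => 1 / |(n : ℝ) + (-(1/2))| ^ s.re :=
      (Real.summable_one_div_int_add_rpow _ s.re).mpr hσ
    have g2 : Summable fun n : ℤ => (2 : ℝ) ^ s.re * (1 / |(n : ℝ) + (-(1/2))| ^ s.re) :=
      g1.mul_left _
    have gprod : Summable fun m : ℤ × ℤ =>
        (1 / |(m.1 : ℝ) + (-(1/2))| ^ s.re)
          * ((2 : ℝ) ^ s.re * (1 / |(m.2 : ℝ) + (-(1/2))| ^ s.re)) :=
      g1.mul_of_nonneg g2 (fun n => by positivity) (fun n => by positivity)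
    refine Summable.of_nonneg_of_le (fun m => by positivity) (fun m => ?_) gprod
    have hx := aux_half_le m.1
    have hy := aux_half_le m.2
    have hx0 : (0:ℝ) < |(m.1 : ℝ) - 1/2| := lt_of_lt_of_le (by norm_num) hx
    have hy0 : (0:ℝ) < |(m.2 : ℝ) - 1/2| := lt_of_lt_of_le (by norm_num) hy
    have hxy : (0 : ℝ) < |(m.1 : ℝ) - 1/2| * |(m.2 : ℝ) - 1/2| / 2 := by positivity
    have hr : (|(m.1 : ℝ) - 1/2| * |(m.2 : ℝ) - 1/2| / 2) ^ s.re
        ≤ (((m.1 : ℝ) - 1/2) ^ 2 + (m.2 : ℝ) ^ 2) ^ s.re :=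
      Real.rpow_le_rpow hxy.le (hp_lb m) (by linarith)
    have hnorm : ‖(-1 : ℂ) ^ m.2‖ = 1 := by
      rw [norm_zpow, norm_neg, norm_one, one_zpow]
    rw [hnorm]
    have h1 : (1 : ℝ) / (((m.1 : ℝ) - 1/2) ^ 2 + (m.2 : ℝ) ^ 2) ^ s.re
        ≤ 1 / (|(m.1 : ℝ) - 1/2| * |(m.2 : ℝ) - 1/2| / 2) ^ s.re :=
      one_div_le_one_div_of_le (Real.rpow_pos_of_pos hxy s.re) hr
    refine h1.trans (le_of_eq ?_)
    rw [Real.div_rpow (by positivity) (by norm_num : (0:ℝ) ≤ 2),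
      Real.mul_rpow hx0.le hy0.le, one_div_div,
      show (m.1 : ℝ) + (-(1/2)) = (m.1 : ℝ) - 1/2 by ring,
      show (m.2 : ℝ) + (-(1/2)) = (m.2 : ℝ) - 1/2 by ring]
    have hxσ : |(m.1 : ℝ) - 1/2| ^ s.re ≠ 0 := (Real.rpow_pos_of_pos hx0 s.re).ne'
    have hyσ : |(m.2 : ℝ) - 1/2| ^ s.re ≠ 0 := (Real.rpow_pos_of_pos hy0 s.re).ne'
    field_simp
  have H := hasSum_mellin hp' hs0 hF h_sum
  have hmellin : mellin (fun t => ((theta2 (rexp (-t)) * theta4 (rexp (-t)) : ℝ) : ℂ)) s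
      = ∫ t in Set.Ioi (0:ℝ),
          ((theta2 (Real.exp (-t)) * theta4 (Real.exp (-t)) : ℝ) : ℂ) * (t : ℂ) ^ (s - 1) := by
    simp only [mellin, smul_eq_mul]
    exact setIntegral_congr_fun measurableSet_Ioi fun t ht => mul_comm _ _
  rw [← hmellin, ← H.tsum_eq, ← tsum_mul_left]
  exact tsum_congr fun m => mul_div_assoc _ _ _
end

section
/- ∫₀¹ k K(k) K'(k) dk = π³/16. -/
open scoped Real
open MeasureTheory

noncomputable def EllK (k : ℝ) : ℝ :=
  ∫ x in (0:ℝ)..(1:ℝ), 1 / Real.sqrt ((1 - x^2) * (1 - k^2 * x^2))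

noncomputable def EllE (k : ℝ) : ℝ :=
  ∫ x in (0:ℝ)..(1:ℝ), Real.sqrt ((1 - k^2 * x^2) / (1 - x^2))

noncomputable def EllK' (k : ℝ) : ℝ := EllK (Real.sqrt (1 - k^2))

namespace Stmt9
open Real Set

noncomputable def q (b u : ℝ) : ℝ := 1 / (Real.sqrt (b^2 - u^2) * Real.sqrt (1 - u^2))

lemma q_nonneg (b u : ℝ) : 0 ≤ q b u := by unfold q; positivity

lemma stepA {k : ℝ} (hk0 : 0 < k) (hk1 : k < 1) :
    EllK k = ∫ u in (0:ℝ)..k, q k u := by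
  have hne : k ≠ 0 := hk0.ne'
  have h1 : EllK k = ∫ x in (0:ℝ)..(1:ℝ), (fun u => k * q k u) (k * x) := by
    refine intervalIntegral.integral_congr (fun x hx => ?_)
    rw [Set.uIcc_of_le (by norm_num : (0:ℝ) ≤ 1)] at hx
    have h1x : (0:ℝ) ≤ 1 - x^2 := by nlinarith [hx.1, hx.2]
    simp only [q]
    have e1 : k^2 - (k*x)^2 = k^2 * (1 - x^2) := by ring
    have e2 : 1 - (k*x)^2 = 1 - k^2 * x^2 := by ring
    have s1 : Real.sqrt (k^2*(1-x^2)) = k * Real.sqrt (1-x^2) := by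
      rw [Real.sqrt_mul (by positivity), Real.sqrt_sq hk0.le]
    have s2 : Real.sqrt ((1-x^2)*(1-k^2*x^2))
        = Real.sqrt (1-x^2) * Real.sqrt (1-k^2*x^2) := Real.sqrt_mul h1x _
    rw [e1, e2, s1, s2, mul_one_div,
      show k*Real.sqrt (1-x^2)*Real.sqrt (1-k^2*x^2)
         = k*(Real.sqrt (1-x^2)*Real.sqrt (1-k^2*x^2)) from mul_assoc _ _ _]
    rw [one_div, ← (div_mul_cancel_left₀ hne (Real.sqrt (1-x^2) * Real.sqrt (1-k^2*x^2)))]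
  have h2 := intervalIntegral.integral_comp_mul_left (a := 0) (b := 1)
    (fun u => k * q k u) hne
  rw [h1, h2, mul_zero, mul_one, intervalIntegral.integral_const_mul, smul_eq_mul,
    ← mul_assoc, inv_mul_cancel₀ hne, one_mul]

lemma q_meas (b : ℝ) : Measurable (q b) := by
  have : Continuous fun u : ℝ => Real.sqrt (b^2 - u^2) * Real.sqrt (1 - u^2) := by
    fun_prop
  unfold q
  simp only [one_div]
  exact this.measurable.inv

lemma q_integrable {k : ℝ} (hk0 : 0 < k) (hk1 : k < 1) :
    IntegrableOn (q k) (Ioo 0 k) := by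
  set C : ℝ := Real.sqrt k * Real.sqrt (1 - k^2) with hC
  have hCpos : 0 < C := by
    apply mul_pos <;> apply Real.sqrt_pos.2 <;> nlinarith
  have hdom : IntegrableOn (fun u => 1 / (C * Real.sqrt (k - u))) (Ioo 0 k) := by
    have : IntegrableOn (fun u => 1 / (C * Real.sqrt (k - u))) (Ioc 0 k) := by
      apply intervalIntegral.integrableOn_deriv_of_nonneg
        (g := fun u => -2 / C * Real.sqrt (k - u))
      · fun_prop
      · intro x hx
        have hkx : 0 < k - x := by simpa using hx.2
        have h1 : HasDerivAt (fun u : ℝ => Real.sqrt (k - u))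
            (1 / (2 * Real.sqrt (k - x)) * (-1)) x :=
          (Real.hasDerivAt_sqrt hkx.ne').comp x (((hasDerivAt_id x).const_sub k))
        have := h1.const_mul (-2 / C)
        refine this.congr_deriv ?_
        have hs : Real.sqrt (k - x) ≠ 0 := by positivity
        field_simp
      · intro x hx
        positivity
    exact this.mono_set Ioo_subset_Ioc_self
  apply hdom.mono' ((q_meas k).aestronglyMeasurable)
  rw [ae_restrict_iff' measurableSet_Ioo]
  refine ae_of_all _ (fun u hu => ?_)
  obtain ⟨hu0, huk⟩ := hu
  have h1 : Real.sqrt (k - u) * C ≤ Real.sqrt (k^2 - u^2) * Real.sqrt (1 - u^2) := by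
    rw [hC, ← mul_assoc]
    apply mul_le_mul
    · rw [← Real.sqrt_mul (by linarith)]
      apply Real.sqrt_le_sqrt; nlinarith
    · apply Real.sqrt_le_sqrt; nlinarith
    · positivity
    · positivity
  have h2 : 0 < Real.sqrt (k - u) * C := by
    apply mul_pos _ hCpos; apply Real.sqrt_pos.2; linarith
  have : q k u ≤ 1 / (C * Real.sqrt (k - u)) := by
    rw [q, mul_comm C]
    exact one_div_le_one_div_of_le h2 h1
  rwa [Real.norm_eq_abs, abs_of_nonneg (by unfold q; positivity)]

section HalfPi
variable {u b : ℝ}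

lemma aux_hasDeriv (hu : 0 ≤ u) (hub : u < b) {k : ℝ} (hk : k ∈ Ioo u b) :
    HasDerivAt (fun k => Real.arcsin ((2*k^2 - u^2 - b^2)/(b^2 - u^2)) / 2)
      (k / (Real.sqrt (k^2 - u^2) * Real.sqrt (b^2 - k^2))) k := by
  obtain ⟨hku, hkb⟩ := hk
  have hk0 : 0 < k := lt_of_le_of_lt hu hku
  have hd : (0:ℝ) < b^2 - u^2 := by nlinarith
  have hA : (0:ℝ) < k^2 - u^2 := by nlinarith
  have hB : (0:ℝ) < b^2 - k^2 := by nlinarith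
  set φ : ℝ := (2*k^2 - u^2 - b^2)/(b^2 - u^2) with hφdef
  have hφ1 : φ < 1 := by rw [hφdef, div_lt_one hd]; nlinarith
  have hφ2 : -1 < φ := by rw [hφdef, lt_div_iff₀ hd]; nlinarith
  have hinner : HasDerivAt (fun k : ℝ => (2*k^2 - u^2 - b^2)/(b^2 - u^2))
      (4*k/(b^2 - u^2)) k := by
    have h := (((hasDerivAt_pow 2 k).const_mul (2:ℝ)).sub_const (u^2 + b^2)).div_const
      (b^2 - u^2)
    convert h using 1
    all_goals first
      | (ext x; ring)
      | (push_cast; ring)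
  have harc := (Real.hasDerivAt_arcsin hφ2.ne' hφ1.ne).comp k hinner
  have h2 := harc.div_const 2
  refine h2.congr_deriv ?_
  have hsq : Real.sqrt (1 - φ^2)
      = 2 * Real.sqrt (k^2 - u^2) * Real.sqrt (b^2 - k^2) / (b^2 - u^2) := by
    have e : 1 - φ^2 = 4*(k^2-u^2)*(b^2-k^2)/(b^2 - u^2)^2 := by
      rw [hφdef]; field_simp; ring
    have e2 : (2 * Real.sqrt (k^2 - u^2) * Real.sqrt (b^2 - k^2) / (b^2 - u^2))^2
        = 4*(k^2-u^2)*(b^2-k^2)/(b^2 - u^2)^2 := by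
      rw [div_pow]; congr 1
      rw [mul_pow, mul_pow, sq_sqrt hA.le, sq_sqrt hB.le]; ring
    rw [e, ← e2, Real.sqrt_sq (by positivity)]
  rw [hsq]
  have hsA : Real.sqrt (k^2 - u^2) ≠ 0 := by positivity
  have hsB : Real.sqrt (b^2 - k^2) ≠ 0 := by positivity
  field_simp
  ring

lemma int_half_pi (hu : 0 ≤ u) (hub : u < b) :
    (∫ k in u..b, k / (Real.sqrt (k^2 - u^2) * Real.sqrt (b^2 - k^2))) = π/2 := by
  have hd : (0:ℝ) < b^2 - u^2 := by nlinarith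
  have hcont : ContinuousOn (fun k => Real.arcsin ((2*k^2 - u^2 - b^2)/(b^2 - u^2)) / 2)
      (Icc u b) := by
    apply ContinuousOn.div_const
    apply Real.continuous_arcsin.comp_continuousOn
    apply ContinuousOn.div_const
    fun_prop
  have hint : IntervalIntegrable
      (fun k => k / (Real.sqrt (k^2 - u^2) * Real.sqrt (b^2 - k^2))) volume u b := by
    apply intervalIntegral.intervalIntegrable_deriv_of_nonneg
    · rwa [uIcc_of_le hub.le]
    · rw [min_eq_left hub.le, max_eq_right hub.le]
      exact fun x hx => aux_hasDeriv hu hub hx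
    · rw [min_eq_left hub.le, max_eq_right hub.le]
      intro x hx
      have : 0 < x := lt_of_le_of_lt hu hx.1
      positivity
  rw [intervalIntegral.integral_eq_sub_of_hasDeriv_right_of_le hub.le hcont
    (fun x hx => (aux_hasDeriv hu hub hx).hasDerivWithinAt) hint]
  have e1 : (2*b^2 - u^2 - b^2)/(b^2 - u^2) = 1 := by
    rw [show 2*b^2 - u^2 - b^2 = b^2 - u^2 by ring, div_self hd.ne']
  have e2 : (2*u^2 - u^2 - b^2)/(b^2 - u^2) = -1 := by
    rw [show 2*u^2 - u^2 - b^2 = -(b^2 - u^2) by ring, neg_div, div_self hd.ne']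
  rw [e1, e2, Real.arcsin_one, Real.arcsin_neg, Real.arcsin_one]
  ring

lemma integrableOn_half_pi (hu : 0 ≤ u) (hub : u < b) :
    IntegrableOn (fun k => k / (Real.sqrt (k^2 - u^2) * Real.sqrt (b^2 - k^2))) (Ioo u b) := by
  have : IntegrableOn
      (fun k => k / (Real.sqrt (k^2 - u^2) * Real.sqrt (b^2 - k^2))) (Ioc u b) := by
    apply intervalIntegral.integrableOn_deriv_of_nonneg
      (g := fun k => Real.arcsin ((2*k^2 - u^2 - b^2)/(b^2 - u^2)) / 2)
    · apply ContinuousOn.div_const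
      apply Real.continuous_arcsin.comp_continuousOn
      apply ContinuousOn.div_const
      fun_prop
    · exact fun x hx => aux_hasDeriv hu hub hx
    · intro x hx
      have : 0 < x := lt_of_le_of_lt hu hx.1
      positivity
  exact this.mono_set Ioo_subset_Ioc_self
end HalfPi

lemma arcsin_cont_integrand {s : ℝ} (hs0 : 0 ≤ s) (hs1 : s < 1) :
    ContinuousOn (fun w : ℝ => 1 / Real.sqrt (1 - w^2)) (Icc 0 s) := by
  apply ContinuousOn.div continuousOn_const (by fun_prop)
  intro w hw
  have : (0:ℝ) < 1 - w^2 := by nlinarith [hw.1, hw.2]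
  positivity

lemma int_arcsin {s : ℝ} (hs0 : 0 ≤ s) (hs1 : s < 1) :
    (∫ w in (0:ℝ)..s, 1 / Real.sqrt (1 - w^2)) = Real.arcsin s := by
  have h := intervalIntegral.integral_eq_sub_of_hasDeriv_right_of_le hs0
    (f := Real.arcsin) (f' := fun w => 1 / Real.sqrt (1 - w^2))
    (Real.continuous_arcsin.continuousOn)
    (fun x hx => (Real.hasDerivAt_arcsin (by nlinarith [hx.1, hx.2] : x ≠ -1)
      (by nlinarith [hx.1, hx.2] : x ≠ 1)).hasDerivWithinAt)
    ((by rw [uIcc_of_le hs0]; exact arcsin_cont_integrand hs0 hs1 :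
      ContinuousOn (fun w : ℝ => 1 / Real.sqrt (1 - w^2)) (uIcc 0 s)).intervalIntegrable)
  rw [h, Real.arcsin_zero, sub_zero]

lemma integrableOn_arcsin_integrand {s : ℝ} (hs0 : 0 ≤ s) (hs1 : s < 1) :
    IntegrableOn (fun w : ℝ => 1 / Real.sqrt (1 - w^2)) (Ioo 0 s) :=
  ((arcsin_cont_integrand hs0 hs1).integrableOn_compact isCompact_Icc).mono_set
    Ioo_subset_Icc_self

lemma final_hasDeriv {x : ℝ} (hx : x ∈ Ioo (0:ℝ) 1) :
    HasDerivAt (fun u : ℝ => -(Real.arcsin (Real.sqrt (1 - u^2)))^2 / 2)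
      (Real.arcsin (Real.sqrt (1 - x^2)) * (1 / Real.sqrt (1 - x^2))) x := by
  obtain ⟨hx0, hx1⟩ := hx
  have h1 : (0:ℝ) < 1 - x^2 := by nlinarith
  have hs1 : Real.sqrt (1 - x^2) < 1 := by
    nlinarith [Real.sq_sqrt h1.le, Real.sqrt_nonneg (1 - x^2)]
  have hs0 : 0 < Real.sqrt (1 - x^2) := Real.sqrt_pos.2 h1
  have hsq : HasDerivAt (fun u : ℝ => Real.sqrt (1 - u^2))
      (1 / (2 * Real.sqrt (1 - x^2)) * (-2*x)) x := by
    have hi : HasDerivAt (fun u : ℝ => 1 - u^2) (-2*x) x := by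
      have := ((hasDerivAt_pow 2 x).const_sub 1)
      refine this.congr_deriv ?_
      push_cast; ring
    exact (Real.hasDerivAt_sqrt h1.ne').comp x hi
  have harc := (Real.hasDerivAt_arcsin (by linarith : Real.sqrt (1 - x^2) ≠ -1)
    hs1.ne).comp x hsq
  have h2 := ((harc.pow 2).neg).div_const 2
  simp only [Function.comp] at h2
  have hxx : Real.sqrt (1 - (1 - x^2)) = x := by
    rw [show 1 - (1-x^2) = x^2 by ring, Real.sqrt_sq hx0.le]
  refine h2.congr_deriv ?_
  rw [sq_sqrt h1.le, hxx]
  have hne : Real.sqrt (1 - x^2) ≠ 0 := hs0.ne'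
  push_cast
  field_simp

lemma final_nonneg {x : ℝ} (hx : x ∈ Ioo (0:ℝ) 1) :
    0 ≤ Real.arcsin (Real.sqrt (1 - x^2)) * (1 / Real.sqrt (1 - x^2)) := by
  have := Real.arcsin_nonneg.2 (Real.sqrt_nonneg (1 - x^2))
  positivity

lemma final_cont : ContinuousOn (fun u : ℝ => -(Real.arcsin (Real.sqrt (1 - u^2)))^2 / 2)
    (Icc (0:ℝ) 1) := by
  apply Continuous.continuousOn
  have : Continuous (fun u : ℝ => Real.sqrt (1 - u^2)) := by fun_prop
  exact ((Real.continuous_arcsin.comp this).pow 2).neg.div_const 2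

lemma int_final :
    (∫ u in (0:ℝ)..1, Real.arcsin (Real.sqrt (1 - u^2)) * (1 / Real.sqrt (1 - u^2)))
      = π^2 / 8 := by
  have hint : IntervalIntegrable
      (fun u : ℝ => Real.arcsin (Real.sqrt (1 - u^2)) * (1 / Real.sqrt (1 - u^2)))
      volume 0 1 := by
    apply intervalIntegral.intervalIntegrable_deriv_of_nonneg
      (g := fun u : ℝ => -(Real.arcsin (Real.sqrt (1 - u^2)))^2 / 2)
    · rw [uIcc_of_le (by norm_num : (0:ℝ) ≤ 1)]
      exact final_cont
    · simp only [min_eq_left, max_eq_right, (by norm_num : (0:ℝ) ≤ 1)]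
      exact fun x hx => final_hasDeriv hx
    · simp only [min_eq_left, max_eq_right, (by norm_num : (0:ℝ) ≤ 1)]
      exact fun x hx => final_nonneg hx
  rw [intervalIntegral.integral_eq_sub_of_hasDeriv_right_of_le (by norm_num) final_cont
    (fun x hx => (final_hasDeriv hx).hasDerivWithinAt) hint]
  norm_num [Real.sqrt_one, Real.arcsin_one]
  ring

lemma integrableOn_final :
    IntegrableOn (fun u : ℝ => Real.arcsin (Real.sqrt (1 - u^2)) * (1 / Real.sqrt (1 - u^2)))
      (Ioo (0:ℝ) 1) := by
  have : IntegrableOn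
      (fun u : ℝ => Real.arcsin (Real.sqrt (1 - u^2)) * (1 / Real.sqrt (1 - u^2)))
      (Ioc (0:ℝ) 1) := by
    apply intervalIntegral.integrableOn_deriv_of_nonneg final_cont
      (fun x hx => final_hasDeriv hx) (fun x hx => final_nonneg hx)
  exact this.mono_set Ioo_subset_Ioc_self


open scoped ENNReal

noncomputable def lw (k u : ℝ) : ℝ≥0∞ :=
  ENNReal.ofReal (k / Real.sqrt (k^2 - u^2) * (1 / Real.sqrt (1 - u^2)))
noncomputable def lv (k w : ℝ) : ℝ≥0∞ :=
  ENNReal.ofReal (1 / Real.sqrt (1 - k^2 - w^2) * (1 / Real.sqrt (1 - w^2)))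
noncomputable def Bfun (k : ℝ) : ℝ≥0∞ := ∫⁻ w in Ioo (0:ℝ) 1, lv k w

lemma meas_lw : Measurable (fun p : ℝ × ℝ => lw p.1 p.2) := by
  unfold lw
  apply ENNReal.measurable_ofReal.comp
  apply Measurable.mul
  · exact (measurable_fst).div
      ((by fun_prop : Continuous fun p : ℝ × ℝ => Real.sqrt (p.1^2 - p.2^2)).measurable)
  · simp only [one_div]
    exact ((by fun_prop : Continuous fun p : ℝ × ℝ => Real.sqrt (1 - p.2^2)).measurable).inv

lemma meas_lv : Measurable (fun p : ℝ × ℝ => lv p.1 p.2) := by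
  unfold lv
  apply ENNReal.measurable_ofReal.comp
  simp only [one_div]
  exact (((by fun_prop : Continuous fun p : ℝ × ℝ =>
      Real.sqrt (1 - p.1^2 - p.2^2)).measurable).inv).mul
    (((by fun_prop : Continuous fun p : ℝ × ℝ => Real.sqrt (1 - p.2^2)).measurable).inv)

lemma meas_lv_left (k : ℝ) : Measurable (lv k) := by
  unfold lv
  apply ENNReal.measurable_ofReal.comp
  simp only [one_div]
  exact (((by fun_prop : Continuous fun w : ℝ =>
      Real.sqrt (1 - k^2 - w^2)).measurable).inv).mul
    (((by fun_prop : Continuous fun w : ℝ => Real.sqrt (1 - w^2)).measurable).inv)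

lemma meas_lw_left (k : ℝ) : Measurable (lw k) := by
  unfold lw
  apply ENNReal.measurable_ofReal.comp
  apply Measurable.mul
  · exact (measurable_const).div
      ((by fun_prop : Continuous fun u : ℝ => Real.sqrt (k^2 - u^2)).measurable)
  · simp only [one_div]
    exact ((by fun_prop : Continuous fun u : ℝ => Real.sqrt (1 - u^2)).measurable).inv

lemma meas_B : Measurable Bfun := by
  unfold Bfun
  exact Measurable.lintegral_prod_right meas_lv

lemma P1 {k : ℝ} (hk0 : 0 < k) (hk1 : k < 1) :
    ENNReal.ofReal (EllK k) = ∫⁻ u in Ioo (0:ℝ) k, ENNReal.ofReal (q k u) := by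
  rw [stepA hk0 hk1, intervalIntegral.integral_of_le hk0.le,
      MeasureTheory.integral_Ioc_eq_integral_Ioo]
  exact ofReal_integral_eq_lintegral_ofReal (q_integrable hk0 hk1)
    (ae_of_all _ (fun u => q_nonneg k u))

lemma P2 {k : ℝ} (hk0 : 0 < k) (hk1 : k < 1) :
    (∫⁻ u in Ioo (0:ℝ) 1, lw k u) = ENNReal.ofReal k * ENNReal.ofReal (EllK k) := by
  have hsub : Ioo (0:ℝ) k ⊆ Ioo (0:ℝ) 1 := Ioo_subset_Ioo_right hk1.le
  have step1 : (∫⁻ u in Ioo (0:ℝ) 1, lw k u)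
      = ∫⁻ u in Ioo (0:ℝ) 1, (Ioo (0:ℝ) k).indicator (lw k) u := by
    refine setLIntegral_congr_fun measurableSet_Ioo (fun u hu => ?_)
    by_cases h : u ∈ Ioo (0:ℝ) k
    · rw [indicator_of_mem h]
    · rw [indicator_of_notMem h]
      have hk_le : k ≤ u := le_of_not_gt (fun hlt => h ⟨hu.1, hlt⟩)
      unfold lw
      rw [Real.sqrt_eq_zero'.2 (by nlinarith [hu.1] : k^2 - u^2 ≤ 0), div_zero, zero_mul,
        ENNReal.ofReal_zero]
  rw [step1, lintegral_indicator measurableSet_Ioo,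
      Measure.restrict_restrict measurableSet_Ioo, inter_eq_self_of_subset_left hsub,
      P1 hk0 hk1, ← lintegral_const_mul' _ _ ENNReal.ofReal_ne_top]
  refine setLIntegral_congr_fun measurableSet_Ioo (fun u hu => ?_)
  unfold lw
  rw [← ENNReal.ofReal_mul hk0.le]
  congr 1
  simp only [q, one_div, div_eq_mul_inv, mul_inv]
  ring

lemma P3 {k : ℝ} (hk0 : 0 < k) (hk1 : k < 1) :
    Bfun k = ENNReal.ofReal (EllK' k) := by
  have h1 : (0:ℝ) < 1 - k^2 := by nlinarith
  set c := Real.sqrt (1 - k^2) with hc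
  have hc0 : 0 < c := Real.sqrt_pos.2 h1
  have hcsq : c^2 = 1 - k^2 := Real.sq_sqrt h1.le
  have hc1 : c < 1 := by nlinarith [hcsq, hc0]
  have hsub : Ioo (0:ℝ) c ⊆ Ioo (0:ℝ) 1 := Ioo_subset_Ioo_right hc1.le
  have hEll : EllK' k = EllK c := by rw [EllK', hc]
  rw [hEll, P1 hc0 hc1]
  unfold Bfun
  have step1 : (∫⁻ w in Ioo (0:ℝ) 1, lv k w)
      = ∫⁻ w in Ioo (0:ℝ) 1,
          (Ioo (0:ℝ) c).indicator (fun w => ENNReal.ofReal (q c w)) w := by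
    refine setLIntegral_congr_fun measurableSet_Ioo (fun w hw => ?_)
    by_cases h : w ∈ Ioo (0:ℝ) c
    · rw [indicator_of_mem h]
      unfold lv
      congr 1
      rw [show (1:ℝ) - k^2 - w^2 = c^2 - w^2 from by rw [hcsq]]
      unfold q
      rw [one_div, one_div, one_div, ← mul_inv]
    · rw [indicator_of_notMem h]
      have hcw : c ≤ w := le_of_not_gt (fun hlt => h ⟨hw.1, hlt⟩)
      have hneg : 1 - k^2 - w^2 ≤ 0 := by nlinarith [hw.1]
      unfold lv
      rw [Real.sqrt_eq_zero'.2 hneg]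
      simp
  rw [step1, lintegral_indicator measurableSet_Ioo,
      Measure.restrict_restrict measurableSet_Ioo, inter_eq_self_of_subset_left hsub]

lemma EllK_nonneg (k : ℝ) : 0 ≤ EllK k := by
  apply intervalIntegral.integral_nonneg zero_le_one
  intro x _
  positivity

lemma EllK'_nonneg (k : ℝ) : 0 ≤ EllK' k := EllK_nonneg _

lemma measK : StronglyMeasurable EllK := by
  have hFm : StronglyMeasurable
      (fun p : ℝ × ℝ => 1 / Real.sqrt ((1 - p.2^2) * (1 - p.1^2 * p.2^2))) := by
    apply Measurable.stronglyMeasurable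
    simp only [one_div]
    exact ((by fun_prop : Continuous fun p : ℝ × ℝ =>
      Real.sqrt ((1 - p.2^2) * (1 - p.1^2 * p.2^2))).measurable).inv
  have h := MeasureTheory.StronglyMeasurable.integral_prod_right
    (ν := volume.restrict (Ioc (0:ℝ) 1))
    (f := fun k x => 1 / Real.sqrt ((1 - x^2) * (1 - k^2 * x^2))) hFm
  have he : EllK = fun k => ∫ x, 1 / Real.sqrt ((1 - x^2) * (1 - k^2 * x^2))
      ∂(volume.restrict (Ioc (0:ℝ) 1)) := by
    funext k
    rw [EllK, intervalIntegral.integral_of_le zero_le_one]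
  rw [he]
  exact h

lemma measF : AEStronglyMeasurable (fun k => k * EllK k * EllK' k)
    (volume.restrict (Ioo (0:ℝ) 1)) := by
  have h1 : StronglyMeasurable EllK' :=
    measK.comp_measurable
      ((by fun_prop : Continuous fun k : ℝ => Real.sqrt (1 - k^2)).measurable)
  exact ((stronglyMeasurable_id.mul measK).mul h1).aestronglyMeasurable

lemma key_lintegral :
    (∫⁻ k in Ioo (0:ℝ) 1, ENNReal.ofReal (k * EllK k * EllK' k))
      = ENNReal.ofReal (π^3/16) := by
  have st1 : ∀ k ∈ Ioo (0:ℝ) 1, ENNReal.ofReal (k * EllK k * EllK' k)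
      = ∫⁻ u in Ioo (0:ℝ) 1, lw k u * Bfun k := by
    intro k hk
    obtain ⟨hk0, hk1⟩ := hk
    have hBne : Bfun k ≠ ⊤ := by rw [P3 hk0 hk1]; exact ENNReal.ofReal_ne_top
    rw [ENNReal.ofReal_mul (mul_nonneg hk0.le (EllK_nonneg k)),
        ENNReal.ofReal_mul hk0.le, ← P3 hk0 hk1, ← P2 hk0 hk1,
        ← lintegral_mul_const' _ _ hBne]
  rw [setLIntegral_congr_fun measurableSet_Ioo st1]
  have hswapmeas : AEMeasurable (Function.uncurry fun k u => lw k u * Bfun k)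
      ((volume.restrict (Ioo (0:ℝ) 1)).prod (volume.restrict (Ioo (0:ℝ) 1))) := by
    apply Measurable.aemeasurable
    exact meas_lw.mul (meas_B.comp measurable_fst)
  rw [lintegral_lintegral_swap hswapmeas]
  -- now : ∫⁻ u, ∫⁻ k, lw k u * Bfun k
  have st3 : ∀ u ∈ Ioo (0:ℝ) 1, (∫⁻ k in Ioo (0:ℝ) 1, lw k u * Bfun k)
      = ENNReal.ofReal (π/2) * ENNReal.ofReal
          (Real.arcsin (Real.sqrt (1 - u^2)) * (1 / Real.sqrt (1 - u^2))) := by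
    intro u hu
    obtain ⟨hu0, hu1⟩ := hu
    have h1u : (0:ℝ) < 1 - u^2 := by nlinarith
    set su := Real.sqrt (1 - u^2) with hsu
    have hsu0 : 0 < su := Real.sqrt_pos.2 h1u
    have hsusq : su^2 = 1 - u^2 := Real.sq_sqrt h1u.le
    have hsu1 : su < 1 := by nlinarith [hsusq, hsu0]
    have hsubu : Ioo (0:ℝ) su ⊆ Ioo (0:ℝ) 1 := Ioo_subset_Ioo_right hsu1.le
    -- (a) rewrite integrand
    have st3a : ∀ k ∈ Ioo (0:ℝ) 1, lw k u * Bfun k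
        = ENNReal.ofReal (1 / Real.sqrt (1 - u^2)) *
          ∫⁻ w in Ioo (0:ℝ) 1, ENNReal.ofReal (k / Real.sqrt (k^2 - u^2)) * lv k w := by
      intro k hk
      have hlw : lw k u = ENNReal.ofReal (k / Real.sqrt (k^2 - u^2)) *
          ENNReal.ofReal (1 / Real.sqrt (1 - u^2)) := by
        unfold lw
        rw [← ENNReal.ofReal_mul (div_nonneg hk.1.le (Real.sqrt_nonneg _))]
      rw [hlw]
      unfold Bfun
      rw [mul_comm (ENNReal.ofReal (k / Real.sqrt (k^2 - u^2)))
            (ENNReal.ofReal (1 / Real.sqrt (1 - u^2))), mul_assoc,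
          ← lintegral_const_mul' _ _ ENNReal.ofReal_ne_top]
    rw [setLIntegral_congr_fun measurableSet_Ioo st3a,
        lintegral_const_mul' _ _ ENNReal.ofReal_ne_top]
    have hswap2 : AEMeasurable
        (Function.uncurry fun k w => ENNReal.ofReal (k / Real.sqrt (k^2 - u^2)) * lv k w)
        ((volume.restrict (Ioo (0:ℝ) 1)).prod (volume.restrict (Ioo (0:ℝ) 1))) := by
      apply Measurable.aemeasurable
      exact (ENNReal.measurable_ofReal.comp ((measurable_fst).div
        ((by fun_prop : Continuous fun p : ℝ × ℝ =>
          Real.sqrt (p.1^2 - u^2)).measurable))).mul meas_lv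
    rw [lintegral_lintegral_swap hswap2]
    -- st3c : inner k integral
    have st3c : ∀ w ∈ Ioo (0:ℝ) 1,
        (∫⁻ k in Ioo (0:ℝ) 1, ENNReal.ofReal (k / Real.sqrt (k^2 - u^2)) * lv k w)
        = (Ioo (0:ℝ) su).indicator
            (fun w => ENNReal.ofReal (π/2) * ENNReal.ofReal (1 / Real.sqrt (1 - w^2))) w := by
      intro w hw
      obtain ⟨hw0, hw1⟩ := hw
      have h1w : (0:ℝ) < 1 - w^2 := by nlinarith
      set c := Real.sqrt (1 - w^2) with hcdef
      have hc0 : 0 < c := Real.sqrt_pos.2 h1w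
      have hcsq : c^2 = 1 - w^2 := Real.sq_sqrt h1w.le
      have hc1 : c < 1 := by nlinarith [hcsq, hc0]
      have st3c1 : ∀ k ∈ Ioo (0:ℝ) 1,
          ENNReal.ofReal (k / Real.sqrt (k^2 - u^2)) * lv k w
          = ENNReal.ofReal (k / (Real.sqrt (k^2 - u^2) * Real.sqrt (c^2 - k^2))) *
            ENNReal.ofReal (1 / Real.sqrt (1 - w^2)) := by
        intro k hk
        unfold lv
        rw [show (1:ℝ) - k^2 - w^2 = c^2 - k^2 from by rw [hcsq]; ring,
            ENNReal.ofReal_mul (by positivity : (0:ℝ) ≤ 1 / Real.sqrt (c^2 - k^2)),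
            ← mul_assoc, ← ENNReal.ofReal_mul (div_nonneg hk.1.le (Real.sqrt_nonneg _))]
        congr 2
        rw [one_div, div_eq_mul_inv, div_eq_mul_inv, mul_inv, mul_assoc]
      rw [setLIntegral_congr_fun measurableSet_Ioo st3c1,
          lintegral_mul_const' _ _ ENNReal.ofReal_ne_top]
      by_cases hcu : u < c
      · -- region nonempty
        have hcu2 : u^2 < 1 - w^2 := by
          have : u < Real.sqrt (1 - w^2) := by rw [← hcdef]; exact hcu
          exact (Real.lt_sqrt hu0.le).1 this
        have hwsu : w < su := by
          rw [hsu]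
          exact (Real.lt_sqrt hw0.le).2 (by nlinarith)
        have hind : ∀ k ∈ Ioo (0:ℝ) 1,
            ENNReal.ofReal (k / (Real.sqrt (k^2 - u^2) * Real.sqrt (c^2 - k^2)))
            = (Ioo u c).indicator
                (fun k => ENNReal.ofReal
                  (k / (Real.sqrt (k^2 - u^2) * Real.sqrt (c^2 - k^2)))) k := by
          intro k hk
          by_cases hmem : k ∈ Ioo u c
          · rw [indicator_of_mem hmem]
          · rw [indicator_of_notMem hmem]
            rcases not_and_or.1 (fun hc' => hmem ⟨hc'.1, hc'.2⟩ : ¬(u < k ∧ k < c)) with h | h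
            · rw [Real.sqrt_eq_zero'.2 (by nlinarith [le_of_not_gt h, hk.1] : k^2 - u^2 ≤ 0),
                zero_mul, div_zero, ENNReal.ofReal_zero]
            · rw [Real.sqrt_eq_zero'.2
                (by nlinarith [le_of_not_gt h, hk.1] : c^2 - k^2 ≤ 0),
                mul_zero, div_zero, ENNReal.ofReal_zero]
        rw [setLIntegral_congr_fun measurableSet_Ioo hind,
            lintegral_indicator measurableSet_Ioo,
            Measure.restrict_restrict measurableSet_Ioo,
            inter_eq_self_of_subset_left (Ioo_subset_Ioo hu0.le hc1.le)]
        have hval : (∫⁻ k in Ioo u c,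
            ENNReal.ofReal (k / (Real.sqrt (k^2 - u^2) * Real.sqrt (c^2 - k^2))))
            = ENNReal.ofReal (π/2) := by
          rw [← ofReal_integral_eq_lintegral_ofReal (integrableOn_half_pi hu0.le hcu)
            ((ae_restrict_iff' measurableSet_Ioo).2 (ae_of_all _ (fun k hk =>
              div_nonneg (le_of_lt (lt_trans hu0 hk.1)) (by positivity))))]
          congr 1
          rw [← MeasureTheory.integral_Ioc_eq_integral_Ioo,
              ← intervalIntegral.integral_of_le hcu.le]
          exact int_half_pi hu0.le hcu
        rw [hval, indicator_of_mem (show w ∈ Ioo (0:ℝ) su from ⟨hw0, hwsu⟩)]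
      · -- empty region : both sides zero
        have hcu' : c ≤ u := le_of_not_gt hcu
        have hzero : ∀ k ∈ Ioo (0:ℝ) 1,
            ENNReal.ofReal (k / (Real.sqrt (k^2 - u^2) * Real.sqrt (c^2 - k^2))) = 0 := by
          intro k hk
          by_cases hku : k ≤ u
          · rw [Real.sqrt_eq_zero'.2 (by nlinarith [hk.1] : k^2 - u^2 ≤ 0), zero_mul, div_zero,
              ENNReal.ofReal_zero]
          · rw [Real.sqrt_eq_zero'.2
              (by nlinarith [le_of_not_ge hku, hk.1] : c^2 - k^2 ≤ 0),
              mul_zero, div_zero, ENNReal.ofReal_zero]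
        rw [setLIntegral_congr_fun measurableSet_Ioo hzero]
        have hwsu : ¬ (w < su) := by
          intro hlt
          apply hcu
          have hlt2 : w < Real.sqrt (1 - u^2) := by rw [← hsu]; exact hlt
          have h2 : w^2 < 1 - u^2 := (Real.lt_sqrt hw0.le).1 hlt2
          rw [hcdef]
          exact (Real.lt_sqrt hu0.le).2 (by nlinarith)
        rw [indicator_of_notMem (fun hmem => hwsu hmem.2)]
        simp
    rw [setLIntegral_congr_fun measurableSet_Ioo st3c]
    rw [lintegral_indicator measurableSet_Ioo,
        Measure.restrict_restrict measurableSet_Ioo,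
        inter_eq_self_of_subset_left hsubu,
        lintegral_const_mul' _ _ ENNReal.ofReal_ne_top]
    have hval2 : (∫⁻ w in Ioo (0:ℝ) su, ENNReal.ofReal (1 / Real.sqrt (1 - w^2)))
        = ENNReal.ofReal (Real.arcsin su) := by
      rw [← ofReal_integral_eq_lintegral_ofReal (integrableOn_arcsin_integrand hsu0.le hsu1)
        (ae_of_all _ (fun w => by positivity))]
      congr 1
      rw [← MeasureTheory.integral_Ioc_eq_integral_Ioo,
          ← intervalIntegral.integral_of_le hsu0.le]
      exact int_arcsin hsu0.le hsu1
    rw [hval2, ENNReal.ofReal_mul (Real.arcsin_nonneg.2 hsu0.le)]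
    ring
  rw [setLIntegral_congr_fun measurableSet_Ioo st3,
      lintegral_const_mul' _ _ ENNReal.ofReal_ne_top,
      ← ofReal_integral_eq_lintegral_ofReal integrableOn_final
        ((ae_restrict_iff' measurableSet_Ioo).2 (ae_of_all _ (fun x hx => final_nonneg hx)))]
  rw [show (∫ u in Ioo (0:ℝ) 1, Real.arcsin (Real.sqrt (1 - u^2)) * (1 / Real.sqrt (1 - u^2)))
      = π^2/8 from by
    rw [← MeasureTheory.integral_Ioc_eq_integral_Ioo,
        ← intervalIntegral.integral_of_le zero_le_one]
    exact int_final]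
  rw [← ENNReal.ofReal_mul (by positivity)]
  congr 1
  ring

end Stmt9

theorem stmt_9 :
    ∫ k in (0:ℝ)..(1:ℝ), k * EllK k * EllK' k = π^3 / 16 := by
  rw [intervalIntegral.integral_of_le zero_le_one,
      MeasureTheory.integral_Ioc_eq_integral_Ioo,
      MeasureTheory.integral_eq_lintegral_of_nonneg_ae
        ((ae_restrict_iff' measurableSet_Ioo).2 (ae_of_all _ (fun k hk =>
          mul_nonneg (mul_nonneg hk.1.le (Stmt9.EllK_nonneg k)) (Stmt9.EllK'_nonneg k))))
        Stmt9.measF,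
      Stmt9.key_lintegral, ENNReal.toReal_ofReal (by positivity)]
end
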